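/- Let c > 0 be real with 2c not an integer, let T > 0, and let α ∈ (0,π). For each integer n ≥ 1 let λ_n and μ_n be the two distinct complex roots of z² + n²z + c²n² = 0, with μ_n = -n²/2 + (n²/2)√(1 - 4c²/n²) (principal complex square root) and λ_n the other root. Then for every (t,x) ∈ (0,T) × (0,π) the series ∑_{n≥1} (sin(nα)/(μ_n - λ_n)) · (e^{μ_n(T-t)} - e^{λ_n(T-t)}) · sin(nx) converges absolutely, and the function ξ(t,x) = (2/π) ∑_{n≥1} (sin(nα)/(μ_n - λ_n)) · (e^{μ_n(T-t)} - e^{λ_n(T-t)}) · sin(nx) is bounded on (0,T) × (0,π). -/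

import Mathlib

lemma aux_sqrt_re_abs_le {w : ℝ} (hw : w ≤ 1) :
    |(((w : ℂ)) ^ ((1 : ℂ)/2)).re| ≤ 1 := by
  rcases le_or_gt 0 w with h0 | h0
  · rw [show ((1:ℂ)/2) = (((1/2 : ℝ)) : ℂ) by norm_num, ← Complex.ofReal_cpow h0]
    simp only [Complex.ofReal_re]
    rw [abs_of_nonneg (Real.rpow_nonneg h0 _)]
    calc w ^ ((1:ℝ)/2) ≤ 1 ^ ((1:ℝ)/2) := Real.rpow_le_rpow h0 hw (by norm_num)
    _ = 1 := Real.one_rpow _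
  · rw [Complex.ofReal_cpow_of_nonpos h0.le]
    have h2 : (Real.pi : ℂ) * Complex.I * ((1:ℂ)/2) = ((Real.pi/2 : ℝ) : ℂ) * Complex.I := by
      push_cast; ring
    have h1 : ((-(w:ℂ)) ^ ((1:ℂ)/2)) = ((((-w) ^ ((1:ℝ)/2) : ℝ)) : ℂ) := by
      rw [show ((1:ℂ)/2) = (((1/2 : ℝ)) : ℂ) by norm_num,
        show (-(w:ℂ)) = (((-w : ℝ)) : ℂ) by push_cast; ring,
        ← Complex.ofReal_cpow (by linarith)]
    rw [h2, h1, Complex.re_ofReal_mul, Complex.exp_ofReal_mul_I_re, Real.cos_pi_div_two,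
      mul_zero, abs_zero]
    norm_num

open Real in
theorem xi_series_bounded
    (c : ℝ) (hc : 0 < c) (hc2 : ∀ m : ℤ, (m : ℝ) ≠ 2 * c)
    (T : ℝ) (hT : 0 < T)
    (α : ℝ) (hα : α ∈ Set.Ioo 0 π)
    (lam mu : ℕ → ℂ)
    (hmu : ∀ n : ℕ, 1 ≤ n →
      mu n = -(n : ℂ) ^ 2 / 2 +
        (n : ℂ) ^ 2 / 2 * ((1 - 4 * (c : ℂ) ^ 2 / (n : ℂ) ^ 2) ^ ((1 : ℂ) / 2)))
    (hlam : ∀ n : ℕ, 1 ≤ n → lam n = -(n : ℂ) ^ 2 - mu n) :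
    (∀ t x : ℝ, t ∈ Set.Ioo 0 T → x ∈ Set.Ioo 0 π →
      Summable fun n : ℕ =>
        ‖((Real.sin ((n + 1 : ℕ) * α) : ℂ) / (mu (n + 1) - lam (n + 1))) *
            (Complex.exp (mu (n + 1) * (T - t)) - Complex.exp (lam (n + 1) * (T - t))) *
            (Real.sin ((n + 1 : ℕ) * x) : ℂ)‖) ∧
    ∃ M : ℝ, ∀ t x : ℝ, t ∈ Set.Ioo 0 T → x ∈ Set.Ioo 0 π →
      ‖(2 / π : ℂ) * ∑' n : ℕ,
          ((Real.sin ((n + 1 : ℕ) * α) : ℂ) / (mu (n + 1) - lam (n + 1))) *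
            (Complex.exp (mu (n + 1) * (T - t)) - Complex.exp (lam (n + 1) * (T - t))) *
            (Real.sin ((n + 1 : ℕ) * x) : ℂ)‖ ≤ M := by
  set w : ℕ → ℝ := fun m => 1 - 4 * c ^ 2 / (m : ℝ) ^ 2 with hwdef
  have hwcast : ∀ m : ℕ, (1 - 4 * (c : ℂ) ^ 2 / (m : ℂ) ^ 2) = ((w m : ℝ) : ℂ) := by
    intro m; simp only [hwdef]; push_cast; ring
  have hwle : ∀ m : ℕ, 1 ≤ m → w m ≤ 1 := by
    intro m hm
    have hm0 : (0:ℝ) < (m:ℝ) := by exact_mod_cast hm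
    have : (0:ℝ) ≤ 4 * c ^ 2 / (m : ℝ) ^ 2 := by positivity
    simp only [hwdef]; linarith
  have hwne : ∀ m : ℕ, 1 ≤ m → w m ≠ 0 := by
    intro m hm h
    have hm0 : (0:ℝ) < (m:ℝ) := by exact_mod_cast hm
    have hm2 : (m:ℝ) ^ 2 = 4 * c ^ 2 := by
      simp only [hwdef] at h
      field_simp at h
      linarith
    have hfac : ((m:ℝ) - 2 * c) * ((m:ℝ) + 2 * c) = 0 := by nlinarith
    rcases mul_eq_zero.1 hfac with h1 | h1
    · exact hc2 (m : ℤ) (by push_cast; linarith)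
    · linarith
  have hdiff : ∀ m : ℕ, 1 ≤ m →
      mu m - lam m = (m : ℂ) ^ 2 * (((w m : ℝ) : ℂ) ^ ((1 : ℂ)/2)) := by
    intro m hm
    rw [hlam m hm, hmu m hm, hwcast m]
    ring
  have hnormD : ∀ m : ℕ, 1 ≤ m →
      ‖mu m - lam m‖ = (m : ℝ) ^ 2 * |w m| ^ ((1:ℝ)/2) := by
    intro m hm
    rw [hdiff m hm, norm_mul, norm_pow,
      show ((1:ℂ)/2) = (((1:ℝ)/2 : ℝ) : ℂ) by norm_num,
      Complex.norm_cpow_real, Complex.norm_real, Real.norm_eq_abs,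
      Complex.norm_natCast]
  have hDpos : ∀ m : ℕ, 1 ≤ m → 0 < ‖mu m - lam m‖ := by
    intro m hm
    rw [hnormD m hm]
    have hm0 : (0:ℝ) < (m:ℝ) := by exact_mod_cast hm
    have hw0 : 0 < |w m| := abs_pos.2 (hwne m hm)
    positivity
  have hmure : ∀ m : ℕ, 1 ≤ m → -(m:ℝ)^2 ≤ (mu m).re ∧ (mu m).re ≤ 0 := by
    intro m hm
    have h1 : mu m = (((m:ℝ)^2/2 : ℝ) : ℂ) * ((((w m) : ℝ) : ℂ) ^ ((1:ℂ)/2) - 1) := by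
      rw [hmu m hm, hwcast m]; push_cast; ring
    have hb := abs_le.1 (aux_sqrt_re_abs_le (hwle m hm))
    have hmsq : (0:ℝ) ≤ (m:ℝ)^2 := sq_nonneg _
    rw [h1, Complex.re_ofReal_mul, Complex.sub_re, Complex.one_re]
    constructor <;> nlinarith [hb.1, hb.2]
  have hlamre : ∀ m : ℕ, 1 ≤ m → (lam m).re ≤ 0 := by
    intro m hm
    have h1 : lam m = ((-(m:ℝ)^2 : ℝ) : ℂ) - mu m := by
      rw [hlam m hm]; push_cast; ring
    rw [h1, Complex.sub_re, Complex.ofReal_re]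
    have := (hmure m hm).1
    linarith
  -- the dominating summable sequence
  set a : ℕ → ℝ := fun n => 2 / ‖mu (n + 1) - lam (n + 1)‖ with hadef
  have ha_nonneg : ∀ n, 0 ≤ a n := fun n => by
    have := hDpos (n+1) (by omega)
    positivity
  have ha : Summable a := by
    rw [← summable_nat_add_iff ⌈8 * c ^ 2⌉₊]
    have hg : Summable (fun n : ℕ => 4 / ((n:ℝ) + 1) ^ 2) := by
      have h1 : Summable (fun n : ℕ => 1 / ((n:ℝ)) ^ 2) :=
        summable_one_div_nat_pow.2 (by norm_num)
      have h2 := (summable_nat_add_iff 1).2 h1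
      have h3 := h2.mul_left 4
      refine h3.congr fun n => ?_
      push_cast
      ring
    refine Summable.of_nonneg_of_le (fun n => ha_nonneg _) (fun n => ?_) hg
    set k := ⌈8 * c ^ 2⌉₊ with hk
    set m : ℕ := n + k + 1 with hmdef
    have hm1 : 1 ≤ m := by omega
    have hm0 : (1:ℝ) ≤ (m:ℝ) := by exact_mod_cast hm1
    have hmk : (8 * c ^ 2 : ℝ) ≤ (m:ℝ) := by
      calc (8 * c ^ 2 : ℝ) ≤ (k:ℝ) := Nat.le_ceil _
      _ ≤ (m:ℝ) := by exact_mod_cast (by omega : k ≤ m)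
    have hmsq : (8 * c ^ 2 : ℝ) ≤ (m:ℝ)^2 := le_trans hmk (by nlinarith)
    have hmpos : (0:ℝ) < (m:ℝ)^2 := by positivity
    have hwhalf : (1:ℝ)/2 ≤ w m := by
      have h4 : 4 * c ^ 2 / (m:ℝ)^2 ≤ 1/2 := by
        rw [div_le_iff₀ hmpos]
        nlinarith
      simp only [hwdef]
      linarith
    have habs : (1:ℝ)/2 ≤ |w m| := le_trans hwhalf (le_abs_self _)
    have hsqrt : (1:ℝ)/2 ≤ |w m| ^ ((1:ℝ)/2) := by
      calc (1:ℝ)/2 = (1/2 : ℝ) ^ (1:ℝ) := by rw [Real.rpow_one]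
      _ ≤ (1/2 : ℝ) ^ ((1:ℝ)/2) :=
        Real.rpow_le_rpow_of_exponent_ge (by norm_num) (by norm_num) (by norm_num)
      _ ≤ |w m| ^ ((1:ℝ)/2) := Real.rpow_le_rpow (by norm_num) habs (by norm_num)
    have hDlb : (m:ℝ)^2 * ((1:ℝ)/2) ≤ ‖mu m - lam m‖ := by
      rw [hnormD m hm1]
      exact mul_le_mul_of_nonneg_left hsqrt (by positivity)
    have hnk : n + k + 1 = m := rfl
    show 2 / ‖mu (n + k + 1) - lam (n + k + 1)‖ ≤ 4 / ((n:ℝ) + 1) ^ 2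
    rw [hnk]
    have h1 : 2 / ‖mu m - lam m‖ ≤ 2 / ((m:ℝ)^2 * ((1:ℝ)/2)) :=
      div_le_div_of_nonneg_left (by norm_num) (by positivity) hDlb
    have h2 : ((n:ℝ) + 1) ^ 2 ≤ (m:ℝ)^2 := by
      have : ((n:ℝ) + 1) ≤ (m:ℝ) := by
        have : (n:ℕ) + 1 ≤ m := by omega
        exact_mod_cast this
      nlinarith
    have h3 : 2 / ((m:ℝ)^2 * ((1:ℝ)/2)) = 4 / (m:ℝ)^2 := by
      field_simp
      norm_num
    have h4 : 4 / (m:ℝ)^2 ≤ 4 / ((n:ℝ) + 1)^2 :=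
      div_le_div_of_nonneg_left (by norm_num) (by positivity) h2
    linarith
  -- termwise bound
  have hsin : ∀ θ : ℝ, ‖((Real.sin θ : ℝ) : ℂ)‖ ≤ 1 := by
    intro θ
    rw [Complex.norm_real, Real.norm_eq_abs]
    exact abs_le.2 ⟨Real.neg_one_le_sin θ, Real.sin_le_one θ⟩
  have hbound : ∀ t x : ℝ, t ∈ Set.Ioo 0 T → x ∈ Set.Ioo 0 π → ∀ n : ℕ,
      ‖((Real.sin ((n + 1 : ℕ) * α) : ℂ) / (mu (n + 1) - lam (n + 1))) *
          (Complex.exp (mu (n + 1) * (T - t)) - Complex.exp (lam (n + 1) * (T - t))) *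
          (Real.sin ((n + 1 : ℕ) * x) : ℂ)‖ ≤ a n := by
    intro t x ht hx n
    have hTt : (0:ℝ) ≤ T - t := by linarith [ht.2]
    have hexp : ∀ z : ℂ, z.re ≤ 0 → ‖Complex.exp (z * ((T:ℂ) - (t:ℂ)))‖ ≤ 1 := by
      intro z hz
      rw [Complex.norm_exp]
      have hre : (z * ((T:ℂ) - (t:ℂ))).re = (T - t) * z.re := by
        rw [show ((T:ℂ) - (t:ℂ)) = ((T - t : ℝ) : ℂ) by push_cast; ring, mul_comm,
          Complex.re_ofReal_mul]
      rw [hre]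
      exact Real.exp_le_one_iff.2 (mul_nonpos_of_nonneg_of_nonpos hTt hz)
    have hE : ‖Complex.exp (mu (n+1) * ((T:ℂ) - (t:ℂ))) -
        Complex.exp (lam (n+1) * ((T:ℂ) - (t:ℂ)))‖ ≤ 2 := by
      calc ‖Complex.exp (mu (n+1) * ((T:ℂ) - (t:ℂ))) -
            Complex.exp (lam (n+1) * ((T:ℂ) - (t:ℂ)))‖
          ≤ ‖Complex.exp (mu (n+1) * ((T:ℂ) - (t:ℂ)))‖ +
            ‖Complex.exp (lam (n+1) * ((T:ℂ) - (t:ℂ)))‖ := norm_sub_le _ _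
        _ ≤ 1 + 1 := add_le_add (hexp _ (hmure (n+1) (by omega)).2)
            (hexp _ (hlamre (n+1) (by omega)))
        _ = 2 := by norm_num
    have hD := hDpos (n+1) (by omega)
    rw [norm_mul, norm_mul, norm_div]
    calc ‖((Real.sin ((n + 1 : ℕ) * α) : ℝ) : ℂ)‖ / ‖mu (n + 1) - lam (n + 1)‖ *
          ‖Complex.exp (mu (n+1) * ((T:ℂ) - (t:ℂ))) -
            Complex.exp (lam (n+1) * ((T:ℂ) - (t:ℂ)))‖ *
          ‖((Real.sin ((n + 1 : ℕ) * x) : ℝ) : ℂ)‖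
        ≤ 1 / ‖mu (n + 1) - lam (n + 1)‖ * 2 * 1 := by
          gcongr <;> first
            | exact hsin _
            | exact hE
      _ = a n := by simp only [hadef]; ring
  refine ⟨fun t x ht hx => Summable.of_nonneg_of_le (fun n => norm_nonneg _)
    (hbound t x ht hx) ha, ⟨‖(2 / (π:ℝ) : ℂ)‖ * ∑' n, a n, fun t x ht hx => ?_⟩⟩
  rw [norm_mul]
  have hsumnorm : Summable fun n : ℕ =>
      ‖((Real.sin ((n + 1 : ℕ) * α) : ℂ) / (mu (n + 1) - lam (n + 1))) *
          (Complex.exp (mu (n + 1) * (T - t)) - Complex.exp (lam (n + 1) * (T - t))) *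
          (Real.sin ((n + 1 : ℕ) * x) : ℂ)‖ :=
    Summable.of_nonneg_of_le (fun n => norm_nonneg _) (hbound t x ht hx) ha
  have h1 : ‖∑' n : ℕ,
      ((Real.sin ((n + 1 : ℕ) * α) : ℂ) / (mu (n + 1) - lam (n + 1))) *
          (Complex.exp (mu (n + 1) * (T - t)) - Complex.exp (lam (n + 1) * (T - t))) *
          (Real.sin ((n + 1 : ℕ) * x) : ℂ)‖ ≤ ∑' n, a n :=
    (norm_tsum_le_tsum_norm hsumnorm).trans (Summable.tsum_le_tsum (hbound t x ht hx) hsumnorm ha)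
  exact mul_le_mul_of_nonneg_left h1 (norm_nonneg _)
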